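/- Let S(u) := max(0, 1 − |u|) be the linear B-spline, let N_x, N_v ≥ 1, Δx, Δv > 0, L := N_x·Δx, R ∈ ℝ, x_i := i·Δx for i ∈ {0,…,N_x−1}, v_l := −R + l·Δv for l ∈ {0,…,N_v−1}. Let ω : {0,…,N_x−1}×{0,…,N_v−1} → ℝ satisfy Δx·Δv·Σ_{k,l} ω_{k,l} = L. Define ρ_i := Δv·Σ_{k,l} ω_{k,l}·S((x_i − x_k)/Δx) − 1, J_i := Δv·Σ_{k,l} ω_{k,l}·v_l·S((x_i − x_k)/Δx), and J̄ := (Δx·Δv/L)·Σ_{k,l} ω_{k,l}·v_l. Then Σ_{i,j} ω_{i,j}·(v_j·ρ_i − J_i + J̄) = 0. -/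

import Mathlib

lemma spline_delta (Δx : ℝ) (hΔx : 0 < Δx) (i k : ℕ) :
    max 0 (1 - |((i : ℝ) * Δx - (k : ℝ) * Δx) / Δx|) = if i = k then 1 else 0 := by
  have h : ((i : ℝ) * Δx - (k : ℝ) * Δx) / Δx = (i : ℝ) - (k : ℝ) := by
    field_simp
  rw [h]
  by_cases hik : i = k
  · simp [hik]
  · have h1 : (1 : ℝ) ≤ |(i : ℝ) - (k : ℝ)| := by
      have hz : ((i : ℤ) - (k : ℤ)) ≠ 0 :=
        sub_ne_zero.mpr (by exact_mod_cast hik)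
      have h2 : ((1 : ℤ) : ℝ) ≤ ((|(i : ℤ) - (k : ℤ)| : ℤ) : ℝ) := by
        exact_mod_cast Int.one_le_abs hz
      push_cast at h2
      linarith
    simp only [if_neg hik]
    have : 1 - |(i : ℝ) - (k : ℝ)| ≤ 0 := by linarith
    exact max_eq_left this

/-- Second-order term cancellation ensuring exact momentum conservation of the CK2
algorithm: with linear-B-spline discrete charge density `ρ_i`, current `J_i` and mean
current `J̄` computed from weights `ω` of total mass `L = N_x Δx`, one has
`Σ_{i,j} ω_{i,j} (v_j ρ_i − J_i + J̄) = 0`. -/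
theorem ck2_momentum_cancellation
    (Nx Nv : ℕ) (hNx : 1 ≤ Nx) (hNv : 1 ≤ Nv)
    (Δx Δv R : ℝ) (hΔx : 0 < Δx) (hΔv : 0 < Δv)
    (ω : ℕ → ℕ → ℝ)
    (hmass : Δx * Δv * ∑ k ∈ Finset.range Nx, ∑ l ∈ Finset.range Nv, ω k l
      = (Nx : ℝ) * Δx)
    (ρ J : ℕ → ℝ) (Jbar : ℝ)
    (hρ : ∀ i, ρ i = Δv * (∑ k ∈ Finset.range Nx, ∑ l ∈ Finset.range Nv,
        ω k l * max 0 (1 - |((i : ℝ) * Δx - (k : ℝ) * Δx) / Δx|)) - 1)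
    (hJ : ∀ i, J i = Δv * ∑ k ∈ Finset.range Nx, ∑ l ∈ Finset.range Nv,
        ω k l * (-R + (l : ℝ) * Δv) * max 0 (1 - |((i : ℝ) * Δx - (k : ℝ) * Δx) / Δx|))
    (hJbar : Jbar = (Δx * Δv / ((Nx : ℝ) * Δx)) *
        ∑ k ∈ Finset.range Nx, ∑ l ∈ Finset.range Nv, ω k l * (-R + (l : ℝ) * Δv)) :
    ∑ i ∈ Finset.range Nx, ∑ j ∈ Finset.range Nv,
      ω i j * ((-R + (j : ℝ) * Δv) * ρ i - J i + Jbar) = 0 := by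
  set A : ℕ → ℝ := fun i => ∑ l ∈ Finset.range Nv, ω i l with hA
  set B : ℕ → ℝ := fun i => ∑ l ∈ Finset.range Nv, ω i l * (-R + (l : ℝ) * Δv) with hB
  have hρ' : ∀ i ∈ Finset.range Nx, ρ i = Δv * A i - 1 := by
    intro i hi
    rw [hρ i]
    simp only [spline_delta Δx hΔx i, mul_ite, mul_one, mul_zero,
      Finset.sum_ite_irrel, Finset.sum_const_zero, Finset.sum_ite_eq, hi, if_true]
    rfl
  have hJ' : ∀ i ∈ Finset.range Nx, J i = Δv * B i := by
    intro i hi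
    rw [hJ i]
    simp only [spline_delta Δx hΔx i, mul_ite, mul_one, mul_zero,
      Finset.sum_ite_irrel, Finset.sum_const_zero, Finset.sum_ite_eq, hi, if_true]
    rfl
  have key : ∑ i ∈ Finset.range Nx, ∑ j ∈ Finset.range Nv,
      ω i j * ((-R + (j : ℝ) * Δv) * ρ i - J i + Jbar)
      = ∑ i ∈ Finset.range Nx, (-(B i) + Jbar * A i) := by
    refine Finset.sum_congr rfl (fun i hi => ?_)
    rw [hρ' i hi, hJ' i hi]
    have : ∀ j, ω i j * ((-R + (j : ℝ) * Δv) * (Δv * A i - 1) - Δv * B i + Jbar)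
        = (Δv * A i - 1) * (ω i j * (-R + (j : ℝ) * Δv))
          + (Jbar - Δv * B i) * ω i j := by intro j; ring
    rw [Finset.sum_congr rfl (fun j _ => this j)]
    rw [Finset.sum_add_distrib, ← Finset.mul_sum, ← Finset.mul_sum]
    simp only [hA, hB]
    ring
  rw [key, Finset.sum_add_distrib, Finset.sum_neg_distrib, ← Finset.mul_sum]
  have hx : Δx ≠ 0 := ne_of_gt hΔx
  have hSA : Δv * ∑ i ∈ Finset.range Nx, A i = (Nx : ℝ) := by
    apply mul_left_cancel₀ hx
    linear_combination hmass
  have hSB : Jbar = (Δx * Δv / ((Nx : ℝ) * Δx)) * ∑ i ∈ Finset.range Nx, B i := hJbar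
  have hNx0 : (Nx : ℝ) ≠ 0 := Nat.cast_ne_zero.mpr (by omega)
  rw [hSB]
  set SA := ∑ i ∈ Finset.range Nx, A i
  set SB := ∑ i ∈ Finset.range Nx, B i
  have : Δx * Δv / ((Nx : ℝ) * Δx) * SA = 1 := by
    field_simp
    linear_combination hSA
  calc -SB + Δx * Δv / ((Nx : ℝ) * Δx) * SB * SA
      = -SB + (Δx * Δv / ((Nx : ℝ) * Δx) * SA) * SB := by ring
    _ = 0 := by rw [this]; ring
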